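/- Let ζ ∈ L¹(ℝ) with |ζ̂(s)| ≤ (1+|s|)^{−1/2−δ} for some δ > 0, where ζ̂(s) = ∫_ℝ e^{−isx}ζ(x)dx, and let a > 0. Then for every μ' ∈ [0,1], lim_{μ→μ'} Σ_{j∈ℤ} | ζ̂(a(j−μ)) − ζ̂(a(j−μ')) |² = 0, where μ ranges over [0,1]. In particular the ℓ²(ℤ)-valued map μ ↦ (ζ̂(a(j−μ)))_{j∈ℤ} is continuous on [0,1]. -/

import Mathlib

open MeasureTheory Filter

/-- The Fourier transform `ζ̂(s) = ∫ e^{−isx} ζ(x) dx`. -/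
noncomputable def zetaHat (ζ : ℝ → ℝ) (s : ℝ) : ℂ :=
  ∫ x : ℝ, Complex.exp (-(↑(s * x) : ℂ) * Complex.I) * (ζ x : ℂ)

lemma zetaHat_continuous (ζ : ℝ → ℝ) (hζ : Integrable ζ) : Continuous (zetaHat ζ) := by
  apply continuous_of_dominated (bound := fun x => ‖ζ x‖)
  · intro s
    apply Integrable.aestronglyMeasurable
    apply hζ.ofReal.bdd_mul (c := 1)
    · exact (Complex.continuous_exp.comp (by continuity)).aestronglyMeasurable
    · refine Filter.Eventually.of_forall fun x => ?_
      rw [Complex.norm_exp]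
      simp
  · intro s
    filter_upwards with x
    rw [norm_mul, Complex.norm_exp]
    simp [Complex.norm_real]
  · exact hζ.norm
  · filter_upwards with x
    exact (Complex.continuous_exp.comp (by continuity)).mul continuous_const

lemma base_bound (a : ℝ) (ha : 0 < a) (μ : ℝ) (hμ : μ ∈ Set.Icc (0:ℝ) 1) (j : ℤ) :
    min 1 a / 2 * (1 + |(j : ℝ)|) ≤ 1 + |a * ((j : ℝ) - μ)| := by
  obtain ⟨h0, h1⟩ := hμ
  have hm1 : min 1 a ≤ 1 := min_le_left _ _
  have hma : min 1 a ≤ a := min_le_right _ _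
  have hm0 : 0 < min 1 a := lt_min one_pos ha
  have habs : |(j : ℝ)| - 1 ≤ |(j : ℝ) - μ| := by
    have h2 : |μ| ≤ 1 := abs_le.mpr ⟨by linarith, h1⟩
    have h3 := abs_sub_abs_le_abs_sub (j : ℝ) μ
    linarith
  have habs0 : (0:ℝ) ≤ |(j : ℝ) - μ| := abs_nonneg _
  rw [abs_mul, abs_of_pos ha]
  rcases le_or_gt (|(j : ℝ)|) 1 with h | h
  · nlinarith [abs_nonneg ((j:ℝ))]
  · nlinarith

theorem multiplier_symbol_l2_continuity
    (ζ : ℝ → ℝ) (hζ : Integrable ζ)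
    (δ : ℝ) (hδ : 0 < δ)
    (hhat : ∀ s : ℝ, ‖zetaHat ζ s‖ ≤ (1 + |s|) ^ (-(1 / 2 : ℝ) - δ))
    (a : ℝ) (ha : 0 < a) :
    ∀ μ' ∈ Set.Icc (0:ℝ) 1,
      Tendsto (fun μ : ℝ =>
          ∑' j : ℤ, ‖zetaHat ζ (a * ((j : ℝ) - μ)) - zetaHat ζ (a * ((j : ℝ) - μ'))‖ ^ 2)
        (nhdsWithin μ' (Set.Icc 0 1)) (nhds 0) := by
  intro μ' hμ'
  set c : ℝ := min 1 a / 2 with hc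
  have hc0 : 0 < c := by positivity
  have hc1 : c ≤ 1 := by
    have : min 1 a ≤ 1 := min_le_left _ _
    rw [hc]; linarith
  set p : ℝ := -(1/2 : ℝ) - δ with hp
  set bound : ℤ → ℝ := fun j => 4 * c ^ (2*p) * (1 + |(j : ℝ)|) ^ (2*p) with hbound
  have hkey : ∀ μ ∈ Set.Icc (0:ℝ) 1, ∀ j : ℤ,
      ‖zetaHat ζ (a * ((j : ℝ) - μ))‖ ≤ (c * (1 + |(j : ℝ)|)) ^ p := by
    intro μ hμ j
    refine (hhat _).trans ?_
    apply Real.rpow_le_rpow_of_nonpos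
    · positivity
    · exact base_bound a ha μ hμ j
    · rw [hp]; linarith
  have hsum : Summable bound := by
    have hs : Summable (fun j : ℤ => 1 / |(j : ℝ) + 1/2| ^ (-(2*p))) :=
      (Real.summable_one_div_int_add_rpow (1/2) (-(2*p))).mpr (by rw [hp]; linarith)
    apply (hs.mul_left (4 * c ^ (2*p))).of_nonneg_of_le (fun j => by positivity)
    intro j
    have hj0 : (0:ℝ) < |(j : ℝ) + 1/2| := by
      apply abs_pos.mpr
      rcases le_or_gt (0:ℤ) j with h | h
      · have : (0:ℝ) ≤ (j:ℝ) := by exact_mod_cast h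
        linarith
      · have : (j:ℝ) ≤ -1 := by exact_mod_cast (show j ≤ -1 by omega)
        linarith
    have hle : |(j : ℝ) + 1/2| ≤ 1 + |(j : ℝ)| := by
      calc |(j : ℝ) + 1/2| ≤ |(j : ℝ)| + |(1/2 : ℝ)| := abs_add_le _ _
        _ = |(j : ℝ)| + 1/2 := by norm_num
        _ ≤ 1 + |(j : ℝ)| := by linarith
    have h1 : (1 + |(j : ℝ)|) ^ (2*p) ≤ |(j : ℝ) + 1/2| ^ (2*p) :=
      Real.rpow_le_rpow_of_nonpos hj0 hle (by rw [hp]; linarith)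
    rw [hbound]
    simp only
    rw [one_div, ← Real.rpow_neg (abs_nonneg _), neg_neg]
    exact mul_le_mul_of_nonneg_left h1 (by positivity)
  have htend : ∀ j : ℤ, Tendsto
      (fun μ : ℝ => ‖zetaHat ζ (a * ((j : ℝ) - μ)) - zetaHat ζ (a * ((j : ℝ) - μ'))‖ ^ 2)
      (nhdsWithin μ' (Set.Icc 0 1)) (nhds 0) := by
    intro j
    have hcont : Continuous (fun μ : ℝ =>
        ‖zetaHat ζ (a * ((j : ℝ) - μ)) - zetaHat ζ (a * ((j : ℝ) - μ'))‖ ^ 2) := by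
      apply Continuous.pow
      apply Continuous.norm
      exact ((zetaHat_continuous ζ hζ).comp (by continuity)).sub continuous_const
    have h := (hcont.tendsto μ').mono_left
      (nhdsWithin_le_nhds (s := Set.Icc (0:ℝ) 1))
    simpa using h
  have hb : ∀ᶠ μ in nhdsWithin μ' (Set.Icc 0 1), ∀ j : ℤ,
      ‖‖zetaHat ζ (a * ((j : ℝ) - μ)) - zetaHat ζ (a * ((j : ℝ) - μ'))‖ ^ 2‖ ≤ bound j := by
    filter_upwards [self_mem_nhdsWithin] with μ hμ j
    have h1 := hkey μ hμ j
    have h2 := hkey μ' hμ' j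
    have hdiff : ‖zetaHat ζ (a * ((j : ℝ) - μ)) - zetaHat ζ (a * ((j : ℝ) - μ'))‖
        ≤ 2 * (c * (1 + |(j : ℝ)|)) ^ p := by
      calc _ ≤ ‖zetaHat ζ (a * ((j : ℝ) - μ))‖ + ‖zetaHat ζ (a * ((j : ℝ) - μ'))‖ :=
            norm_sub_le _ _
        _ ≤ 2 * (c * (1 + |(j : ℝ)|)) ^ p := by linarith
    rw [Real.norm_of_nonneg (by positivity)]
    have hsq : ‖zetaHat ζ (a * ((j : ℝ) - μ)) - zetaHat ζ (a * ((j : ℝ) - μ'))‖ ^ 2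
        ≤ (2 * (c * (1 + |(j : ℝ)|)) ^ p) ^ 2 := by
      apply sq_le_sq' _ hdiff
      have : (0:ℝ) ≤ 2 * (c * (1 + |(j : ℝ)|)) ^ p := by positivity
      linarith [norm_nonneg (zetaHat ζ (a * ((j : ℝ) - μ)) - zetaHat ζ (a * ((j : ℝ) - μ')))]
    refine hsq.trans_eq ?_
    rw [hbound]
    simp only
    rw [mul_pow, ← Real.rpow_natCast ((c * (1 + |(j : ℝ)|)) ^ p) 2,
      ← Real.rpow_mul (by positivity), Real.mul_rpow hc0.le (by positivity)]
    norm_num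
    ring_nf
  have := tendsto_tsum_of_dominated_convergence (f := fun (μ : ℝ) (j : ℤ) =>
      ‖zetaHat ζ (a * ((j : ℝ) - μ)) - zetaHat ζ (a * ((j : ℝ) - μ'))‖ ^ 2)
      (g := fun _ => (0:ℝ)) hsum htend hb
  simpa using this
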